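/- Let Γ be a connected vertex-transitive digraph with Property Z such that, for some vertex v, the stabilizer G_v acts quasi-primitively on both in(v) and out(v), where G = Aut(Γ). If the pointwise stabilizer G_{(Γ_0)} of the fibre Γ_0 is non-trivial, then Γ is highly-arc-transitive. -/

import Mathlib

variable {V : Type*}

/-- The automorphism group of a digraph given by its arc relation `E`. -/
def autGroup (E : V → V → Prop) : Subgroup (Equiv.Perm V) where
  carrier := {g | ∀ u v : V, E u v ↔ E (g u) (g v)}
  one_mem' := by intro u v; simp
  mul_mem' := by
    intro a b ha hb u v
    simpa [Equiv.Perm.mul_apply] using (hb u v).trans (ha (b u) (b v))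
  inv_mem' := by
    intro a ha u v
    simpa using (ha (a⁻¹ u) (a⁻¹ v)).symm

/-- Connectedness of a digraph (in the underlying undirected sense). -/
def DConnected (E : V → V → Prop) : Prop :=
  ∀ u v : V, Relation.ReflTransGen (fun a b => E a b ∨ E b a) u v

/-- `f : Fin (k+1) → V` is a `k`-arc. -/
def IsKArc (E : V → V → Prop) (k : ℕ) (f : Fin (k + 1) → V) : Prop :=
  ∀ i : Fin k, E (f i.castSucc) (f i.succ)

def KArcTransitive (E : V → V → Prop) (k : ℕ) : Prop :=
  ∀ f g : Fin (k + 1) → V, IsKArc E k f → IsKArc E k g →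
    ∃ a ∈ autGroup E, ∀ i, (a : Equiv.Perm V) (f i) = g i

def HighlyArcTransitive (E : V → V → Prop) : Prop :=
  ∀ k : ℕ, KArcTransitive E k

def VertexTransitive (E : V → V → Prop) : Prop :=
  ∀ u v : V, ∃ a ∈ autGroup E, (a : Equiv.Perm V) u = v

def ArcTransitive (E : V → V → Prop) : Prop :=
  ∀ u v x y : V, E u v → E x y →
    ∃ a ∈ autGroup E, (a : Equiv.Perm V) u = x ∧ (a : Equiv.Perm V) v = y

/-- Reachability in the underlying undirected graph avoiding the vertex set `S`. -/
def ReachAvoid (E : V → V → Prop) (S : Set V) : V → V → Prop :=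
  Relation.ReflTransGen (fun a b => (E a b ∨ E b a) ∧ a ∉ S ∧ b ∉ S)

/-- `u` lies in an infinite component of the complement of `S`. -/
def InfComp (E : V → V → Prop) (S : Set V) (u : V) : Prop :=
  u ∉ S ∧ {w | ReachAvoid E S u w}.Infinite

/-- A connected digraph with exactly two ends. -/
def TwoEnded (E : V → V → Prop) : Prop :=
  DConnected E ∧
  (∀ S : Set V, S.Finite → ∀ u v w : V, InfComp E S u → InfComp E S v → InfComp E S w →
    ReachAvoid E S u v ∨ ReachAvoid E S u w ∨ ReachAvoid E S v w) ∧
  ∃ S : Set V, S.Finite ∧ ∃ u v : V, InfComp E S u ∧ InfComp E S v ∧ ¬ ReachAvoid E S u v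

/-- The stabilizer of a vertex `v` in the automorphism group. -/
def vStab (E : V → V → Prop) (v : V) : Subgroup (autGroup E) where
  carrier := {g | (g : Equiv.Perm V) v = v}
  one_mem' := rfl
  mul_mem' := by
    intro a b ha hb
    simp only [Set.mem_setOf_eq] at *
    simp [Subgroup.coe_mul, Equiv.Perm.mul_apply, ha, hb]
  inv_mem' := by
    intro a ha
    simp only [Set.mem_setOf_eq] at *
    have := congrArg (((a : Equiv.Perm V))⁻¹ : Equiv.Perm V) ha
    simpa using this.symm

def outSet (E : V → V → Prop) (v : V) : Set V := {u | E v u}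
def inSet (E : V → V → Prop) (v : V) : Set V := {u | E u v}

/-- The stabilizer of `v` acts quasi-primitively on the set `Ω`. -/
def QuasiPrimitivelyOn (E : V → V → Prop) (v : V) (Ω : Set V) : Prop :=
  (∀ u ∈ Ω, ∀ w ∈ Ω, ∃ g ∈ vStab E v, ((g : autGroup E) : Equiv.Perm V) u = w) ∧
  (∀ N : Subgroup (vStab E v), N.Normal →
    (∀ n ∈ N, ∀ u ∈ Ω, (((n : vStab E v) : autGroup E) : Equiv.Perm V) u = u) ∨
    (∀ u ∈ Ω, ∀ w ∈ Ω, ∃ n ∈ N, (((n : vStab E v) : autGroup E) : Equiv.Perm V) u = w))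

theorem Equiv.Perm.inv_apply_self {α : Type*} (f : Equiv.Perm α) (x : α) : f⁻¹ (f x) = x :=
  f.symm_apply_apply x

theorem Equiv.Perm.apply_inv_self {α : Type*} (f : Equiv.Perm α) (x : α) : f (f⁻¹ x) = x :=
  f.apply_symm_apply x

section AuxHAT

variable {V : Type*} {E : V → V → Prop} {φ : V → ℤ}

lemma shift_const (hconn : DConnected E) (hhom : ∀ u v : V, E u v → φ v = φ u + 1)
    {a : Equiv.Perm V} (ha : a ∈ autGroup E) (x y : V) :
    φ (a x) - φ x = φ (a y) - φ y := by
  have h := hconn x y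
  induction h with
  | refl => rfl
  | @tail b c _ step ih =>
      rcases step with h | h
      · have h1 := hhom _ _ h
        have h2 := hhom _ _ ((ha b c).mp h)
        omega
      · have h1 := hhom _ _ h
        have h2 := hhom _ _ ((ha c b).mp h)
        omega

lemma exists_edge (hconn : DConnected E) (hsurj : Function.Surjective φ)
    (hhom : ∀ u v : V, E u v → φ v = φ u + 1) : ∃ u v : V, E u v := by
  by_contra hne
  push_neg at hne
  obtain ⟨x, hx⟩ := hsurj 0
  obtain ⟨y, hy⟩ := hsurj 1
  have h := hconn x y
  have hxy : x = y := by
    induction h with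
    | refl => rfl
    | @tail b c _ step ih =>
        rcases step with h | h
        · exact absurd h (hne _ _)
        · exact absurd h (hne _ _)
  rw [hxy, hy] at hx
  norm_num at hx

lemma exists_out (hconn : DConnected E) (hvt : VertexTransitive E)
    (hsurj : Function.Surjective φ) (hhom : ∀ u v : V, E u v → φ v = φ u + 1)
    (w : V) : ∃ x, E w x := by
  obtain ⟨u, v, huv⟩ := exists_edge hconn hsurj hhom
  obtain ⟨a, ha, hau⟩ := hvt u w
  exact ⟨a v, by rw [← hau]; exact (ha u v).mp huv⟩

lemma exists_in (hconn : DConnected E) (hvt : VertexTransitive E)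
    (hsurj : Function.Surjective φ) (hhom : ∀ u v : V, E u v → φ v = φ u + 1)
    (w : V) : ∃ x, E x w := by
  obtain ⟨u, v, huv⟩ := exists_edge hconn hsurj hhom
  obtain ⟨a, ha, hav⟩ := hvt v w
  exact ⟨a u, by rw [← hav]; exact (ha u v).mp huv⟩

lemma exists_map_all (hconn : DConnected E) (hvt : VertexTransitive E)
    (hhom : ∀ u v : V, E u v → φ v = φ u + 1) (u w : V) :
    ∃ a : Equiv.Perm V, a ∈ autGroup E ∧ a u = w ∧
      ∀ x, φ (a x) - φ x = φ w - φ u := by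
  obtain ⟨a, ha, hau⟩ := hvt u w
  refine ⟨a, ha, hau, fun x => ?_⟩
  rw [← hau]
  exact shift_const hconn hhom ha x u

lemma arc_level (hhom : ∀ u v : V, E u v → φ v = φ u + 1)
    {k : ℕ} {f : Fin (k+1) → V} (hf : IsKArc E k f) (i : Fin (k+1)) :
    φ (f i) = φ (f 0) + (i : ℕ) := by
  obtain ⟨n, hn⟩ := i
  induction n with
  | zero => simp
  | succ n ih =>
      have hnk : n < k := by omega
      have hn' : n < k + 1 := by omega
      have hstep := hhom _ _ (hf ⟨n, hnk⟩)
      have e1 : (⟨n, hnk⟩ : Fin k).castSucc = (⟨n, hn'⟩ : Fin (k+1)) := rfl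
      have e2 : (⟨n, hnk⟩ : Fin k).succ = (⟨n+1, hn⟩ : Fin (k+1)) := rfl
      rw [e1, e2] at hstep
      have := ih hn'
      push_cast at this ⊢
      omega

end AuxHAT
section GlueHAT

variable {V : Type*} {E : V → V → Prop} {φ : V → ℤ}

/-- Cut-and-paste an automorphism fixing fibre 0 across that fibre: we obtain a nontrivial
automorphism fixing all levels `≤ 0` pointwise, or one fixing all levels `≥ 0` pointwise. -/
lemma glue_half (hconn : DConnected E) (hsurj : Function.Surjective φ)
    (hhom : ∀ u v : V, E u v → φ v = φ u + 1)
    {g : Equiv.Perm V} (hg : g ∈ autGroup E)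
    (hfix0 : ∀ x, φ x = 0 → g x = x) (hgne : g ≠ 1) :
    (∃ h : Equiv.Perm V, h ∈ autGroup E ∧ (∀ w, φ w ≤ 0 → h w = w) ∧ h ≠ 1) ∨
    (∃ h : Equiv.Perm V, h ∈ autGroup E ∧ (∀ w, 0 ≤ φ w → h w = w) ∧ h ≠ 1) := by
  classical
  obtain ⟨x0, hx0⟩ := hsurj 0
  have hs : ∀ x, φ (g x) = φ x := by
    intro x
    have := shift_const hconn hhom hg x x0
    rw [hfix0 x0 hx0] at this
    omega
  have hs' : ∀ x, φ (g⁻¹ x) = φ x := by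
    intro x
    have := hs (g⁻¹ x)
    rw [Equiv.Perm.apply_inv_self] at this
    omega
  set h : Equiv.Perm V :=
    { toFun := fun x => if 1 ≤ φ x then g x else x
      invFun := fun x => if 1 ≤ φ x then g⁻¹ x else x
      left_inv := by
        intro x
        by_cases hx : 1 ≤ φ x
        · have hgx : (1:ℤ) ≤ φ (g x) := by rw [hs]; exact hx
          simp only [if_pos hx, if_pos hgx, Equiv.Perm.inv_apply_self]
        · simp only [if_neg hx]
      right_inv := by
        intro x
        by_cases hx : 1 ≤ φ x
        · have hgx : (1:ℤ) ≤ φ (g⁻¹ x) := by rw [hs']; exact hx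
          simp only [if_pos hx, if_pos hgx, Equiv.Perm.apply_inv_self]
        · simp only [if_neg hx] } with hdef
  have happ : ∀ x, h x = if 1 ≤ φ x then g x else x := fun x => rfl
  have hlev : ∀ x, φ (h x) = φ x := by
    intro x
    rw [happ]
    by_cases hx : 1 ≤ φ x
    · rw [if_pos hx, hs]
    · rw [if_neg hx]
  have hmem : h ∈ autGroup E := by
    intro u v
    constructor
    · intro huv
      have hl := hhom _ _ huv
      rw [happ, happ]
      by_cases h1 : 1 ≤ φ u
      · have h2 : 1 ≤ φ v := by omega
        rw [if_pos h1, if_pos h2]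
        exact (hg u v).mp huv
      · by_cases h2 : 1 ≤ φ v
        · have hu0 : φ u = 0 := by omega
          rw [if_neg h1, if_pos h2]
          have := (hg u v).mp huv
          rwa [hfix0 u hu0] at this
        · rw [if_neg h1, if_neg h2]
          exact huv
    · intro hEh
      have hl : φ v = φ u + 1 := by
        have := hhom _ _ hEh
        rw [hlev u, hlev v] at this
        exact this
      rw [happ, happ] at hEh
      by_cases h1 : 1 ≤ φ u
      · have h2 : 1 ≤ φ v := by omega
        rw [if_pos h1, if_pos h2] at hEh
        exact (hg u v).mpr hEh
      · by_cases h2 : 1 ≤ φ v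
        · have hu0 : φ u = 0 := by omega
          rw [if_neg h1, if_pos h2] at hEh
          have : E (g u) (g v) := by rwa [hfix0 u hu0]
          exact (hg u v).mpr this
        · rw [if_neg h1, if_neg h2] at hEh
          exact hEh
  by_cases hh1 : h = 1
  · right
    refine ⟨g, hg, ?_, hgne⟩
    intro w hw
    rcases eq_or_lt_of_le hw with hw0 | hw1
    · exact hfix0 w hw0.symm
    · have : h w = w := by rw [hh1]; rfl
      rwa [happ, if_pos (by omega : (1:ℤ) ≤ φ w)] at this
  · left
    refine ⟨h, hmem, ?_, hh1⟩
    intro w hw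
    rw [happ, if_neg (by omega : ¬ (1:ℤ) ≤ φ w)]

end GlueHAT
section KeyHAT

variable {V : Type*} {E : V → V → Prop} {φ : V → ℤ}

lemma key_out (hconn : DConnected E) (hvt : VertexTransitive E)
    (hsurj : Function.Surjective φ)
    (hhom : ∀ u v : V, E u v → φ v = φ u + 1)
    {v0 : V} (hqp : QuasiPrimitivelyOn E v0 (outSet E v0))
    {h : Equiv.Perm V} (hh : h ∈ autGroup E)
    (hfix : ∀ w, φ w ≤ 0 → h w = w) (hne : h ≠ 1) :
    ∀ u x y, E u x → E u y →
      ∃ a : Equiv.Perm V, a ∈ autGroup E ∧ a x = y ∧ ∀ w, φ w ≤ φ u → a w = w := by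
  classical
  -- there is a minimal moved level, and it is positive
  have hmoved : ∃ n : ℕ, ∃ z, φ z = (n : ℤ) + 1 ∧ h z ≠ z := by
    have hz : ∃ z, h z ≠ z := by
      by_contra hz
      push_neg at hz
      exact hne (Equiv.ext hz)
    obtain ⟨z, hz⟩ := hz
    have hz1 : 1 ≤ φ z := by
      by_contra hle
      push_neg at hle
      exact hz (hfix z (by omega))
    exact ⟨(φ z - 1).toNat, z, by omega, hz⟩
  set nm := Nat.find hmoved with hnm
  obtain ⟨z, hzlevel, hzmoved⟩ := Nat.find_spec hmoved
  set m : ℤ := (nm : ℤ) + 1 with hm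
  -- h fixes everything at level ≤ m - 1
  have hfixm : ∀ w, φ w ≤ m - 1 → h w = w := by
    intro w hw
    by_contra hmove
    have h1 : 1 ≤ φ w := by
      by_contra hle
      push_neg at hle
      exact hmove (hfix w (by omega))
    have hlt : (φ w - 1).toNat < nm := by omega
    exact Nat.find_min hmoved hlt ⟨w, by omega, hmove⟩
  -- an in-neighbour of the moved vertex z
  obtain ⟨u0, hu0⟩ := exists_in hconn hvt hsurj hhom z
  have hu0level : φ u0 = m - 1 := by
    have := hhom _ _ hu0
    omega
  -- σ maps v0 to u0
  obtain ⟨σ, hσ, hσv, hσs⟩ := exists_map_all hconn hvt hhom v0 u0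
  -- the normal subgroup N of the stabilizer of v0
  set N : Subgroup ↥(vStab E v0) :=
    { carrier := {b | ∀ x : V, φ (σ x) ≤ m - 1 →
        ((b : ↥(autGroup E)) : Equiv.Perm V) x = x}
      one_mem' := by intro x hx; rfl
      mul_mem' := by
        intro a b ha hb x hx
        have hbx := hb x hx
        have hax := ha x hx
        show (((a * b : ↥(vStab E v0)) : ↥(autGroup E)) : Equiv.Perm V) x = x
        have : (((a * b : ↥(vStab E v0)) : ↥(autGroup E)) : Equiv.Perm V)
            = ((a : ↥(autGroup E)) : Equiv.Perm V) * ((b : ↥(autGroup E)) : Equiv.Perm V) := rfl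
        rw [this, Equiv.Perm.mul_apply, hbx, hax]
      inv_mem' := by
        intro a ha x hx
        have hax := ha x hx
        show (((a⁻¹ : ↥(vStab E v0)) : ↥(autGroup E)) : Equiv.Perm V) x = x
        have hc : (((a⁻¹ : ↥(vStab E v0)) : ↥(autGroup E)) : Equiv.Perm V)
            = (((a : ↥(autGroup E)) : Equiv.Perm V))⁻¹ := rfl
        rw [hc]
        conv_lhs => rw [← hax]
        exact Equiv.Perm.inv_apply_self _ _ } with hNdef
  have hmemN : ∀ b : ↥(vStab E v0), b ∈ N ↔ ∀ x : V, φ (σ x) ≤ m - 1 →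
      ((b : ↥(autGroup E)) : Equiv.Perm V) x = x := fun b => Iff.rfl
  -- N is normal in the stabilizer
  have hNnormal : N.Normal := by
    constructor
    intro n hn b
    rw [hmemN]
    intro x hx
    set B : Equiv.Perm V := ((b : ↥(autGroup E)) : Equiv.Perm V) with hB
    have hBaut : B ∈ autGroup E := (b : ↥(autGroup E)).2
    have hBv0 : B v0 = v0 := b.2
    have hBinv : B⁻¹ ∈ autGroup E := (autGroup E).inv_mem hBaut
    have hBinvv0 : B⁻¹ v0 = v0 := by rw [← hBv0, Equiv.Perm.inv_apply_self, hBv0]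
    have e1 : φ (B⁻¹ x) - φ x = φ (B⁻¹ v0) - φ v0 := shift_const hconn hhom hBinv x v0
    rw [hBinvv0] at e1
    have e2 : φ (σ (B⁻¹ x)) - φ (B⁻¹ x) = φ (σ x) - φ x := by
      have := hσs (B⁻¹ x)
      have := hσs x
      omega
    have hcond : φ (σ (B⁻¹ x)) ≤ m - 1 := by omega
    have hnx := (hmemN n).mp hn (B⁻¹ x) hcond
    show (((b * n * b⁻¹ : ↥(vStab E v0)) : ↥(autGroup E)) : Equiv.Perm V) x = x
    have hc : (((b * n * b⁻¹ : ↥(vStab E v0)) : ↥(autGroup E)) : Equiv.Perm V)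
        = B * ((n : ↥(autGroup E)) : Equiv.Perm V) * B⁻¹ := rfl
    rw [hc, Equiv.Perm.mul_apply, Equiv.Perm.mul_apply, hnx, Equiv.Perm.apply_inv_self]
  -- apply the quasi-primitivity dichotomy
  rcases hqp.2 N hNnormal with htriv | htrans
  · -- impossible: the conjugate of h lies in N and moves σ⁻¹ z ∈ out(v0)
    exfalso
    set Sg : ↥(autGroup E) := ⟨σ, hσ⟩ with hSg
    set Hg : ↥(autGroup E) := ⟨h, hh⟩ with hHg
    set elem : ↥(autGroup E) := Sg⁻¹ * Hg * Sg with helem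
    have helemc : (elem : Equiv.Perm V) = σ⁻¹ * h * σ := rfl
    have helemapp : ∀ x, (elem : Equiv.Perm V) x = σ⁻¹ (h (σ x)) := by
      intro x; rw [helemc]; rfl
    have helemv : (elem : Equiv.Perm V) v0 = v0 := by
      rw [helemapp, hσv, hfixm u0 (by omega), ← hσv, Equiv.Perm.inv_apply_self]
    have hnmem : (⟨elem, helemv⟩ : ↥(vStab E v0)) ∈ N := by
      rw [hmemN]
      intro x hx
      show (elem : Equiv.Perm V) x = x
      rw [helemapp, hfixm (σ x) hx, Equiv.Perm.inv_apply_self]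
    have hzout : σ⁻¹ z ∈ outSet E v0 := by
      show E v0 (σ⁻¹ z)
      have : E (σ v0) (σ (σ⁻¹ z)) := by
        rw [hσv, Equiv.Perm.apply_inv_self]
        exact hu0
      exact (hσ v0 (σ⁻¹ z)).mpr this
    have := htriv _ hnmem (σ⁻¹ z) hzout
    rw [helemapp, Equiv.Perm.apply_inv_self] at this
    have : h z = σ (σ⁻¹ z) := by
      rw [← this, Equiv.Perm.apply_inv_self]
    rw [Equiv.Perm.apply_inv_self] at this
    exact hzmoved this
  · -- transitive case : build the required automorphism
    intro u x y hux huy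
    obtain ⟨ρ, hρ, hρv, hρs⟩ := exists_map_all hconn hvt hhom v0 u
    have hρinv : ρ⁻¹ ∈ autGroup E := (autGroup E).inv_mem hρ
    have hpx : ρ⁻¹ x ∈ outSet E v0 := by
      show E v0 (ρ⁻¹ x)
      have : E (ρ v0) (ρ (ρ⁻¹ x)) := by
        rw [hρv, Equiv.Perm.apply_inv_self]; exact hux
      exact (hρ v0 (ρ⁻¹ x)).mpr this
    have hpy : ρ⁻¹ y ∈ outSet E v0 := by
      show E v0 (ρ⁻¹ y)
      have : E (ρ v0) (ρ (ρ⁻¹ y)) := by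
        rw [hρv, Equiv.Perm.apply_inv_self]; exact huy
      exact (hρ v0 (ρ⁻¹ y)).mpr this
    obtain ⟨n, hnN, hnpq⟩ := htrans _ hpx _ hpy
    set A : Equiv.Perm V := ((n : ↥(autGroup E)) : Equiv.Perm V) with hA
    have hAaut : A ∈ autGroup E := (n : ↥(autGroup E)).2
    refine ⟨ρ * A * ρ⁻¹, ?_, ?_, ?_⟩
    · exact (autGroup E).mul_mem ((autGroup E).mul_mem hρ hAaut) hρinv
    · show ρ (A (ρ⁻¹ x)) = y
      rw [hnpq, Equiv.Perm.apply_inv_self]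
    · intro w hw
      show ρ (A (ρ⁻¹ w)) = w
      have e1 : φ (ρ⁻¹ w) = φ w - (φ u - φ v0) := by
        have := hρs (ρ⁻¹ w)
        rw [Equiv.Perm.apply_inv_self] at this
        omega
      have e2 : φ (σ (ρ⁻¹ w)) ≤ m - 1 := by
        have := hσs (ρ⁻¹ w)
        omega
      rw [(hmemN n).mp hnN (ρ⁻¹ w) e2, Equiv.Perm.apply_inv_self]

end KeyHAT
section KeyHAT2

variable {V : Type*} {E : V → V → Prop} {φ : V → ℤ}

lemma key_in (hconn : DConnected E) (hvt : VertexTransitive E)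
    (hsurj : Function.Surjective φ)
    (hhom : ∀ u v : V, E u v → φ v = φ u + 1)
    {v0 : V} (hqp : QuasiPrimitivelyOn E v0 (inSet E v0))
    {h : Equiv.Perm V} (hh : h ∈ autGroup E)
    (hfix : ∀ w, 0 ≤ φ w → h w = w) (hne : h ≠ 1) :
    ∀ u x y, E x u → E y u →
      ∃ a : Equiv.Perm V, a ∈ autGroup E ∧ a x = y ∧ ∀ w, φ u ≤ φ w → a w = w := by
  classical
  have hmoved : ∃ n : ℕ, ∃ z, φ z = -((n : ℤ) + 1) ∧ h z ≠ z := by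
    have hz : ∃ z, h z ≠ z := by
      by_contra hz
      push_neg at hz
      exact hne (Equiv.ext hz)
    obtain ⟨z, hz⟩ := hz
    have hz1 : φ z ≤ -1 := by
      by_contra hle
      push_neg at hle
      exact hz (hfix z (by omega))
    exact ⟨(-φ z - 1).toNat, z, by omega, hz⟩
  set nm := Nat.find hmoved with hnm
  obtain ⟨z, hzlevel, hzmoved⟩ := Nat.find_spec hmoved
  set m : ℤ := -((nm : ℤ) + 1) with hm
  have hfixm : ∀ w, m + 1 ≤ φ w → h w = w := by
    intro w hw
    by_contra hmove
    have h1 : φ w ≤ -1 := by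
      by_contra hle
      push_neg at hle
      exact hmove (hfix w (by omega))
    have hlt : (-φ w - 1).toNat < nm := by omega
    exact Nat.find_min hmoved hlt ⟨w, by omega, hmove⟩
  obtain ⟨u0, hu0⟩ := exists_out hconn hvt hsurj hhom z
  have hu0level : φ u0 = m + 1 := by
    have := hhom _ _ hu0
    omega
  obtain ⟨σ, hσ, hσv, hσs⟩ := exists_map_all hconn hvt hhom v0 u0
  set N : Subgroup ↥(vStab E v0) :=
    { carrier := {b | ∀ x : V, m + 1 ≤ φ (σ x) →
        ((b : ↥(autGroup E)) : Equiv.Perm V) x = x}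
      one_mem' := by intro x hx; rfl
      mul_mem' := by
        intro a b ha hb x hx
        have hbx := hb x hx
        have hax := ha x hx
        show (((a * b : ↥(vStab E v0)) : ↥(autGroup E)) : Equiv.Perm V) x = x
        have : (((a * b : ↥(vStab E v0)) : ↥(autGroup E)) : Equiv.Perm V)
            = ((a : ↥(autGroup E)) : Equiv.Perm V) * ((b : ↥(autGroup E)) : Equiv.Perm V) := rfl
        rw [this, Equiv.Perm.mul_apply, hbx, hax]
      inv_mem' := by
        intro a ha x hx
        have hax := ha x hx
        show (((a⁻¹ : ↥(vStab E v0)) : ↥(autGroup E)) : Equiv.Perm V) x = x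
        have hc : (((a⁻¹ : ↥(vStab E v0)) : ↥(autGroup E)) : Equiv.Perm V)
            = (((a : ↥(autGroup E)) : Equiv.Perm V))⁻¹ := rfl
        rw [hc]
        conv_lhs => rw [← hax]
        exact Equiv.Perm.inv_apply_self _ _ } with hNdef
  have hmemN : ∀ b : ↥(vStab E v0), b ∈ N ↔ ∀ x : V, m + 1 ≤ φ (σ x) →
      ((b : ↥(autGroup E)) : Equiv.Perm V) x = x := fun b => Iff.rfl
  have hNnormal : N.Normal := by
    constructor
    intro n hn b
    rw [hmemN]
    intro x hx
    set B : Equiv.Perm V := ((b : ↥(autGroup E)) : Equiv.Perm V) with hB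
    have hBaut : B ∈ autGroup E := (b : ↥(autGroup E)).2
    have hBv0 : B v0 = v0 := b.2
    have hBinv : B⁻¹ ∈ autGroup E := (autGroup E).inv_mem hBaut
    have hBinvv0 : B⁻¹ v0 = v0 := by rw [← hBv0, Equiv.Perm.inv_apply_self, hBv0]
    have e1 : φ (B⁻¹ x) - φ x = φ (B⁻¹ v0) - φ v0 := shift_const hconn hhom hBinv x v0
    rw [hBinvv0] at e1
    have e2 : φ (σ (B⁻¹ x)) - φ (B⁻¹ x) = φ (σ x) - φ x := by
      have := hσs (B⁻¹ x)
      have := hσs x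
      omega
    have hcond : m + 1 ≤ φ (σ (B⁻¹ x)) := by omega
    have hnx := (hmemN n).mp hn (B⁻¹ x) hcond
    show (((b * n * b⁻¹ : ↥(vStab E v0)) : ↥(autGroup E)) : Equiv.Perm V) x = x
    have hc : (((b * n * b⁻¹ : ↥(vStab E v0)) : ↥(autGroup E)) : Equiv.Perm V)
        = B * ((n : ↥(autGroup E)) : Equiv.Perm V) * B⁻¹ := rfl
    rw [hc, Equiv.Perm.mul_apply, Equiv.Perm.mul_apply, hnx, Equiv.Perm.apply_inv_self]
  rcases hqp.2 N hNnormal with htriv | htrans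
  · exfalso
    set Sg : ↥(autGroup E) := ⟨σ, hσ⟩ with hSg
    set Hg : ↥(autGroup E) := ⟨h, hh⟩ with hHg
    set elem : ↥(autGroup E) := Sg⁻¹ * Hg * Sg with helem
    have helemc : (elem : Equiv.Perm V) = σ⁻¹ * h * σ := rfl
    have helemapp : ∀ x, (elem : Equiv.Perm V) x = σ⁻¹ (h (σ x)) := by
      intro x; rw [helemc]; rfl
    have helemv : (elem : Equiv.Perm V) v0 = v0 := by
      rw [helemapp, hσv, hfixm u0 (by omega), ← hσv, Equiv.Perm.inv_apply_self]
    have hnmem : (⟨elem, helemv⟩ : ↥(vStab E v0)) ∈ N := by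
      rw [hmemN]
      intro x hx
      show (elem : Equiv.Perm V) x = x
      rw [helemapp, hfixm (σ x) hx, Equiv.Perm.inv_apply_self]
    have hzin : σ⁻¹ z ∈ inSet E v0 := by
      show E (σ⁻¹ z) v0
      have : E (σ (σ⁻¹ z)) (σ v0) := by
        rw [hσv, Equiv.Perm.apply_inv_self]
        exact hu0
      exact (hσ (σ⁻¹ z) v0).mpr this
    have := htriv _ hnmem (σ⁻¹ z) hzin
    rw [helemapp, Equiv.Perm.apply_inv_self] at this
    have : h z = σ (σ⁻¹ z) := by
      rw [← this, Equiv.Perm.apply_inv_self]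
    rw [Equiv.Perm.apply_inv_self] at this
    exact hzmoved this
  · intro u x y hux huy
    obtain ⟨ρ, hρ, hρv, hρs⟩ := exists_map_all hconn hvt hhom v0 u
    have hρinv : ρ⁻¹ ∈ autGroup E := (autGroup E).inv_mem hρ
    have hpx : ρ⁻¹ x ∈ inSet E v0 := by
      show E (ρ⁻¹ x) v0
      have : E (ρ (ρ⁻¹ x)) (ρ v0) := by
        rw [hρv, Equiv.Perm.apply_inv_self]; exact hux
      exact (hρ (ρ⁻¹ x) v0).mpr this
    have hpy : ρ⁻¹ y ∈ inSet E v0 := by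
      show E (ρ⁻¹ y) v0
      have : E (ρ (ρ⁻¹ y)) (ρ v0) := by
        rw [hρv, Equiv.Perm.apply_inv_self]; exact huy
      exact (hρ (ρ⁻¹ y) v0).mpr this
    obtain ⟨n, hnN, hnpq⟩ := htrans _ hpx _ hpy
    set A : Equiv.Perm V := ((n : ↥(autGroup E)) : Equiv.Perm V) with hA
    have hAaut : A ∈ autGroup E := (n : ↥(autGroup E)).2
    refine ⟨ρ * A * ρ⁻¹, ?_, ?_, ?_⟩
    · exact (autGroup E).mul_mem ((autGroup E).mul_mem hρ hAaut) hρinv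
    · show ρ (A (ρ⁻¹ x)) = y
      rw [hnpq, Equiv.Perm.apply_inv_self]
    · intro w hw
      show ρ (A (ρ⁻¹ w)) = w
      have e1 : φ (ρ⁻¹ w) = φ w - (φ u - φ v0) := by
        have := hρs (ρ⁻¹ w)
        rw [Equiv.Perm.apply_inv_self] at this
        omega
      have e2 : m + 1 ≤ φ (σ (ρ⁻¹ w)) := by
        have := hσs (ρ⁻¹ w)
        omega
      rw [(hmemN n).mp hnN (ρ⁻¹ w) e2, Equiv.Perm.apply_inv_self]

end KeyHAT2
section HATInd

variable {V : Type*} {E : V → V → Prop} {φ : V → ℤ}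

lemma hat_forward (hvt : VertexTransitive E)
    (hhom : ∀ u v : V, E u v → φ v = φ u + 1)
    (hout : ∀ u x y, E u x → E u y →
      ∃ a : Equiv.Perm V, a ∈ autGroup E ∧ a x = y ∧ ∀ w, φ w ≤ φ u → a w = w) :
    HighlyArcTransitive E := by
  intro k
  induction k with
  | zero =>
      intro f g _ _
      obtain ⟨a, ha, haf⟩ := hvt (f 0) (g 0)
      refine ⟨a, ha, fun i => ?_⟩
      have h0 : i = 0 := by
        have := i.isLt
        exact Fin.ext (by simpa using (by omega : (i : ℕ) = 0))
      rw [h0]; exact haf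
  | succ k ih =>
      intro f g hf hg
      have hf' : IsKArc E k (f ∘ Fin.castSucc) := by
        intro i
        have := hf i.castSucc
        rw [Fin.succ_castSucc] at this
        exact this
      have hg' : IsKArc E k (g ∘ Fin.castSucc) := by
        intro i
        have := hg i.castSucc
        rw [Fin.succ_castSucc] at this
        exact this
      obtain ⟨b, hb, hbf⟩ := ih _ _ hf' hg'
      have he1 : E (f (Fin.last k).castSucc) (f (Fin.last (k+1))) := by
        have := hf (Fin.last k)
        rwa [Fin.succ_last] at this
      have he2 : E (g (Fin.last k).castSucc) (g (Fin.last (k+1))) := by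
        have := hg (Fin.last k)
        rwa [Fin.succ_last] at this
      have hbl : b (f (Fin.last k).castSucc) = g (Fin.last k).castSucc := hbf (Fin.last k)
      have he1' : E (g (Fin.last k).castSucc) (b (f (Fin.last (k+1)))) := by
        have := (hb _ _).mp he1
        rwa [hbl] at this
      obtain ⟨a, ha, hay, hafix⟩ := hout _ _ _ he1' he2
      refine ⟨a * b, (autGroup E).mul_mem ha hb, ?_⟩
      intro i
      refine Fin.lastCases ?_ ?_ i
      · show (a * b) (f (Fin.last (k+1))) = g (Fin.last (k+1))
        rw [Equiv.Perm.mul_apply, hay]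
      · intro j
        show (a * b) (f j.castSucc) = g j.castSucc
        rw [Equiv.Perm.mul_apply, show b (f j.castSucc) = g j.castSucc from hbf j]
        refine hafix _ ?_
        have l1 := arc_level hhom hg j.castSucc
        have l2 := arc_level hhom hg (Fin.last k).castSucc
        have hj : (j : ℕ) ≤ k := Fin.is_le j
        have hv1 : ((j.castSucc : Fin (k+2)) : ℕ) = (j : ℕ) := rfl
        have hv2 : (((Fin.last k).castSucc : Fin (k+2)) : ℕ) = k := rfl
        rw [hv1] at l1
        rw [hv2] at l2
        omega

lemma hat_backward (hvt : VertexTransitive E)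
    (hhom : ∀ u v : V, E u v → φ v = φ u + 1)
    (hin : ∀ u x y, E x u → E y u →
      ∃ a : Equiv.Perm V, a ∈ autGroup E ∧ a x = y ∧ ∀ w, φ u ≤ φ w → a w = w) :
    HighlyArcTransitive E := by
  intro k
  induction k with
  | zero =>
      intro f g _ _
      obtain ⟨a, ha, haf⟩ := hvt (f 0) (g 0)
      refine ⟨a, ha, fun i => ?_⟩
      have h0 : i = 0 := by
        have := i.isLt
        exact Fin.ext (by simpa using (by omega : (i : ℕ) = 0))
      rw [h0]; exact haf
  | succ k ih =>
      intro f g hf hg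
      have hf' : IsKArc E k (f ∘ Fin.succ) := by
        intro i
        have := hf i.succ
        show E (f i.castSucc.succ) (f i.succ.succ)
        rwa [Fin.succ_castSucc]
      have hg' : IsKArc E k (g ∘ Fin.succ) := by
        intro i
        have := hg i.succ
        show E (g i.castSucc.succ) (g i.succ.succ)
        rwa [Fin.succ_castSucc]
      obtain ⟨b, hb, hbf⟩ := ih _ _ hf' hg'
      have he1 : E (f (0 : Fin (k+1)).castSucc) (f (0 : Fin (k+1)).succ) := hf 0
      have he2 : E (g (0 : Fin (k+1)).castSucc) (g (0 : Fin (k+1)).succ) := hg 0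
      have hb0 : b (f (0 : Fin (k+1)).succ) = g (0 : Fin (k+1)).succ := hbf 0
      have he1' : E (b (f (0 : Fin (k+1)).castSucc)) (g (0 : Fin (k+1)).succ) := by
        have := (hb _ _).mp he1
        rwa [hb0] at this
      obtain ⟨a, ha, hay, hafix⟩ := hin _ _ _ he1' he2
      refine ⟨a * b, (autGroup E).mul_mem ha hb, ?_⟩
      intro i
      refine Fin.cases ?_ ?_ i
      · show (a * b) (f 0) = g 0
        rw [Equiv.Perm.mul_apply]
        have e0 : ((0 : Fin (k+1)).castSucc : Fin (k+2)) = 0 := rfl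
        rw [← e0, hay, e0]
      · intro j
        show (a * b) (f j.succ) = g j.succ
        rw [Equiv.Perm.mul_apply, show b (f j.succ) = g j.succ from hbf j]
        refine hafix _ ?_
        have l1 := arc_level hhom hg j.succ
        have l2 := arc_level hhom hg (0 : Fin (k+1)).succ
        have hv1 : ((j.succ : Fin (k+2)) : ℕ) = (j : ℕ) + 1 := rfl
        have hv2 : (((0 : Fin (k+1)).succ : Fin (k+2)) : ℕ) = 1 := rfl
        rw [hv1] at l1
        rw [hv2] at l2
        omega

end HATInd
/-- Let `Γ` be a connected vertex-transitive digraph with Property Z such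
that for some vertex `v` the stabilizer `G_v` acts quasi-primitively on both `in(v)` and
`out(v)`. If the pointwise stabilizer of the fibre `Γ₀` is non-trivial, then `Γ` is
highly-arc-transitive. -/
theorem highly_arc_transitive_of_quasiPrimitive
    {V : Type*} (E : V → V → Prop)
    (hconn : DConnected E) (hvt : VertexTransitive E)
    (φ : V → ℤ) (hsurj : Function.Surjective φ)
    (hhom : ∀ u v : V, E u v → φ v = φ u + 1)
    (hqp : ∃ v : V, QuasiPrimitivelyOn E v (inSet E v) ∧ QuasiPrimitivelyOn E v (outSet E v))
    (hnt : ∃ g : Equiv.Perm V, g ∈ autGroup E ∧ (∀ x : V, φ x = 0 → g x = x) ∧ g ≠ 1) :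
    HighlyArcTransitive E := by
  classical
  obtain ⟨v0, hqpin, hqpout⟩ := hqp
  obtain ⟨g, hg, hgfix, hgne⟩ := hnt
  rcases glue_half hconn hsurj hhom hg hgfix hgne with
    ⟨h, hh, hfix, hne⟩ | ⟨h, hh, hfix, hne⟩
  · exact hat_forward hvt hhom (key_out hconn hvt hsurj hhom hqpout hh hfix hne)
  · exact hat_backward hvt hhom (key_in hconn hvt hsurj hhom hqpin hh hfix hne)
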